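/- With η := 2(1 + τ²), the shifted extended tilted-CHSH Bell operator admits the sum-of-squares decomposition η·I_{nm} − S = N₀ᴴN₀ + τ²·N₁ᴴN₁, where N₀ᴴ denotes the conjugate transpose of N₀. -/

import Mathlib

open Matrix Kronecker

section helpers
variable {n m : ℕ}

theorem kronCT (A : Matrix (Fin n) (Fin n) ℂ) (B : Matrix (Fin m) (Fin m) ℂ) :
    (A ⊗ₖ B)ᴴ = Aᴴ ⊗ₖ Bᴴ := by
  ext ⟨i,j⟩ ⟨k,l⟩
  simp [conjTranspose_apply, kroneckerMap_apply]

theorem kronMul (A C : Matrix (Fin n) (Fin n) ℂ) (B D : Matrix (Fin m) (Fin m) ℂ) :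
    (A ⊗ₖ B) * (C ⊗ₖ D) = (A * C) ⊗ₖ (B * D) :=
  (Matrix.mul_kronecker_mul A C B D).symm

theorem kronOne : ((1 : Matrix (Fin n) (Fin n) ℂ) ⊗ₖ (1 : Matrix (Fin m) (Fin m) ℂ)) = 1 := by
  ext ⟨i,j⟩ ⟨k,l⟩
  simp [kroneckerMap_apply, Matrix.one_apply, Prod.ext_iff]
  split <;> simp_all

theorem kronAddR (A : Matrix (Fin n) (Fin n) ℂ) (B C : Matrix (Fin m) (Fin m) ℂ) :
    A ⊗ₖ (B + C) = A ⊗ₖ B + A ⊗ₖ C := by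
  ext ⟨i,j⟩ ⟨k,l⟩; simp [kroneckerMap_apply, mul_add]

theorem kronAddL (A B : Matrix (Fin n) (Fin n) ℂ) (C : Matrix (Fin m) (Fin m) ℂ) :
    (A + B) ⊗ₖ C = A ⊗ₖ C + B ⊗ₖ C := by
  ext ⟨i,j⟩ ⟨k,l⟩; simp [kroneckerMap_apply, add_mul]

theorem kronSubR (A : Matrix (Fin n) (Fin n) ℂ) (B C : Matrix (Fin m) (Fin m) ℂ) :
    A ⊗ₖ (B - C) = A ⊗ₖ B - A ⊗ₖ C := by
  ext ⟨i,j⟩ ⟨k,l⟩; simp [kroneckerMap_apply, mul_sub]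

theorem kronSubL (A B : Matrix (Fin n) (Fin n) ℂ) (C : Matrix (Fin m) (Fin m) ℂ) :
    (A - B) ⊗ₖ C = A ⊗ₖ C - B ⊗ₖ C := by
  ext ⟨i,j⟩ ⟨k,l⟩; simp [kroneckerMap_apply, sub_mul]

end helpers

/-- The extended tilted-CHSH Bell operator `S_{θ,φ}`. -/
noncomputable def tiltedBellOp (θ φ τ : ℝ) {n m : ℕ}
    (A₀ A₁ : Matrix (Fin n) (Fin n) ℂ) (B₀ B₁ : Matrix (Fin m) (Fin m) ℂ) :
    Matrix (Fin n × Fin m) (Fin n × Fin m) ℂ :=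
  (Real.cos φ)⁻¹ • (A₀ ⊗ₖ (B₀ + B₁))
    + τ ^ 2 • (Real.sin (2 * θ) • ((Real.sin φ)⁻¹ • (A₁ ⊗ₖ (B₀ - B₁)))
        + Real.cos (2 * θ) •
            ((Real.cos φ)⁻¹ • ((1 : Matrix (Fin n) (Fin n) ℂ) ⊗ₖ (B₀ + B₁))))

/-- The SOS polynomial `N₀ = A₀ ⊗ 1 − 1 ⊗ (B₀+B₁)/(2 cos φ)`. -/
noncomputable def tiltedN₀ (φ : ℝ) {n m : ℕ}
    (A₀ : Matrix (Fin n) (Fin n) ℂ) (B₀ B₁ : Matrix (Fin m) (Fin m) ℂ) :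
    Matrix (Fin n × Fin m) (Fin n × Fin m) ℂ :=
  A₀ ⊗ₖ (1 : Matrix (Fin m) (Fin m) ℂ)
    - (2 * Real.cos φ)⁻¹ • ((1 : Matrix (Fin n) (Fin n) ℂ) ⊗ₖ (B₀ + B₁))

/-- The SOS polynomial
`N₁ = A₁ ⊗ 1 − sin(2θ)·1 ⊗ (B₀−B₁)/(2 sin φ) − cos(2θ)·A₁ ⊗ (B₀+B₁)/(2 cos φ)`. -/
noncomputable def tiltedN₁ (θ φ : ℝ) {n m : ℕ}
    (A₁ : Matrix (Fin n) (Fin n) ℂ) (B₀ B₁ : Matrix (Fin m) (Fin m) ℂ) :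
    Matrix (Fin n × Fin m) (Fin n × Fin m) ℂ :=
  A₁ ⊗ₖ (1 : Matrix (Fin m) (Fin m) ℂ)
    - Real.sin (2 * θ) •
        ((2 * Real.sin φ)⁻¹ • ((1 : Matrix (Fin n) (Fin n) ℂ) ⊗ₖ (B₀ - B₁)))
    - Real.cos (2 * θ) • ((2 * Real.cos φ)⁻¹ • (A₁ ⊗ₖ (B₀ + B₁)))

set_option maxHeartbeats 1000000 in
/-- With `η := 2(1 + τ²)`, the shifted extended tilted-CHSH Bell operator
admits the sum-of-squares decomposition `η·1 − S = N₀ᴴN₀ + τ²·N₁ᴴN₁`. -/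
theorem tilted_chsh_sos_decomposition (θ φ τ : ℝ)
    (hθ : θ ∈ Set.Ioc 0 (Real.pi / 4))
    (hφ0 : φ ≠ 0)
    (hφl : max (-(2 * θ)) (-Real.pi + 2 * θ) < φ)
    (hφu : φ < min (2 * θ) (Real.pi - 2 * θ))
    (hτpos : 0 < τ)
    (hτ : 1 / τ ^ 2 = Real.sin (2 * θ) ^ 2 / Real.tan φ ^ 2 - Real.cos (2 * θ) ^ 2)
    (n m : ℕ) (hn : 0 < n) (hm : 0 < m)
    (A₀ A₁ : Matrix (Fin n) (Fin n) ℂ) (B₀ B₁ : Matrix (Fin m) (Fin m) ℂ)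
    (hA₀ : A₀.IsHermitian) (hA₁ : A₁.IsHermitian)
    (hB₀ : B₀.IsHermitian) (hB₁ : B₁.IsHermitian)
    (hA₀sq : A₀ * A₀ = 1) (hA₁sq : A₁ * A₁ = 1)
    (hB₀sq : B₀ * B₀ = 1) (hB₁sq : B₁ * B₁ = 1) :
    (2 * (1 + τ ^ 2)) • (1 : Matrix (Fin n × Fin m) (Fin n × Fin m) ℂ)
        - tiltedBellOp θ φ τ A₀ A₁ B₀ B₁
      = (tiltedN₀ φ A₀ B₀ B₁)ᴴ * tiltedN₀ φ A₀ B₀ B₁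
          + τ ^ 2 • ((tiltedN₁ θ φ A₁ B₀ B₁)ᴴ * tiltedN₁ θ φ A₁ B₀ B₁) := by
  obtain ⟨hθ0, hθ4⟩ := hθ
  have hπ := Real.pi_pos
  have h1 : -(2*θ) ≤ max (-(2 * θ)) (-Real.pi + 2 * θ) := le_max_left _ _
  have h2 : min (2 * θ) (Real.pi - 2 * θ) ≤ 2*θ := min_le_left _ _
  have hφlt : φ < Real.pi / 2 := by linarith
  have hφgt : -(Real.pi / 2) < φ := by linarith
  have hc : Real.cos φ ≠ 0 := ne_of_gt (Real.cos_pos_of_mem_Ioo ⟨hφgt, hφlt⟩)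
  have hs : Real.sin φ ≠ 0 := by
    rw [ne_eq, Real.sin_eq_zero_iff_of_lt_of_lt (by linarith) (by linarith)]
    exact hφ0
  have hτ0 : τ ≠ 0 := ne_of_gt hτpos
  have hkey : τ^2 * (Real.sin (2*θ)^2 * Real.cos φ^2 - Real.cos (2*θ)^2 * Real.sin φ^2)
      = Real.sin φ ^ 2 := by
    rw [Real.tan_eq_sin_div_cos] at hτ
    field_simp at hτ
    linarith [hτ]
  unfold tiltedBellOp tiltedN₀ tiltedN₁
  simp only [conjTranspose_sub, conjTranspose_smul, kronCT, conjTranspose_one,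
    hA₀.eq, hA₁.eq, hB₀.eq, hB₁.eq, star_trivial, conjTranspose_add,
    kronAddR, kronAddL, kronSubR, kronSubL,
    sub_mul, mul_sub, add_mul, mul_add, smul_mul_assoc, mul_smul_comm,
    kronMul, one_mul, mul_one, Matrix.one_mul, Matrix.mul_one,
    hA₀sq, hA₁sq, hB₀sq, hB₁sq, kronOne, smul_sub, smul_add]
  match_scalars
  all_goals try ring
  all_goals field_simp
  all_goals try ring
  all_goals ring_nf at hkey ⊢
  all_goals try (linear_combination (4 : ℝ) * hkey)
  · linear_combination (4 * Real.cos φ^2 - 1 + 2 * Real.sin φ^2 * (1 - 4 * Real.cos φ^2)) * hkey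
      - 2 * Real.sin φ^2 * (1 - 4 * Real.cos φ^2) * τ^2 * Real.cos φ^2 * Real.sin_sq_add_cos_sq (θ*2)
      + 2 * Real.sin φ^2 * (1 - 4 * Real.cos φ^2) * (τ^2 * Real.cos (θ*2)^2 + 1) * Real.sin_sq_add_cos_sq φ
      - 4 * Real.cos φ^2 * (1 - 2 * Real.sin φ^2) * hkey
      + 8 * Real.cos φ^2 * Real.sin φ^2 * (1 + τ^2 * Real.cos (θ*2)^2) * Real.sin_sq_add_cos_sq φ
      - 8 * τ^2 * Real.cos φ^4 * Real.sin φ^2 * Real.sin_sq_add_cos_sq (θ*2)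
  all_goals
    linear_combination (1 + 4 * Real.cos φ^2 - 8 * Real.cos φ^2 * Real.sin φ^2) * hkey
      + 8 * Real.cos φ^2 * Real.sin φ^2 * τ^2 * Real.cos φ^2 * Real.sin_sq_add_cos_sq (θ*2)
      - 8 * Real.cos φ^2 * Real.sin φ^2 * (τ^2 * Real.cos (θ*2)^2 + 1) * Real.sin_sq_add_cos_sq φ
      - 4 * Real.cos φ^2 * (1 - 2 * Real.sin φ^2) * hkey
      + 8 * Real.cos φ^2 * Real.sin φ^2 * (1 + τ^2 * Real.cos (θ*2)^2) * Real.sin_sq_add_cos_sq φ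
      - 8 * τ^2 * Real.cos φ^4 * Real.sin φ^2 * Real.sin_sq_add_cos_sq (θ*2)
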